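/- For an involution y in S_n, the set of reduced involution words of y equals the disjoint union over atoms w ∈ A(y) of the sets of reduced words of w. -/

import Mathlib

open scoped Classical

noncomputable section

/-- The simple transposition `s_i` in `S_n` (0-indexed: swaps `i` and `i+1`). -/
def simpleT (n i : ℕ) : Equiv.Perm (Fin n) :=
  if h : i + 1 < n then Equiv.swap ⟨i, Nat.lt_of_succ_lt h⟩ ⟨i + 1, h⟩ else 1

/-- The product of the word `l` of simple transpositions. -/
def wordProd (n : ℕ) (l : List ℕ) : Equiv.Perm (Fin n) :=
  (l.map (simpleT n)).prod

/-- The Coxeter length of a permutation: minimal length of a word of simple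
transpositions with product `w`. -/
def len (n : ℕ) (w : Equiv.Perm (Fin n)) : ℕ :=
  sInf {p | ∃ l : List ℕ, l.length = p ∧ wordProd n l = w}

/-- One step of the (right) Demazure / 0-Hecke product: `w ∘ s_i`. -/
def demStepR (n : ℕ) (w : Equiv.Perm (Fin n)) (i : ℕ) : Equiv.Perm (Fin n) :=
  if len n w < len n (w * simpleT n i) then w * simpleT n i else w

/-- One step of the (left) Demazure / 0-Hecke product: `s_i ∘ w`. -/
def demStepL (n i : ℕ) (w : Equiv.Perm (Fin n)) : Equiv.Perm (Fin n) :=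
  if len n w < len n (simpleT n i * w) then simpleT n i * w else w

/-- The Demazure product of the word `l`: `s_{a_1} ∘ s_{a_2} ∘ ⋯ ∘ s_{a_p}`. -/
def demWord (n : ℕ) (l : List ℕ) : Equiv.Perm (Fin n) :=
  l.foldl (demStepR n) 1

/-- `w⁻¹ ∘ w = y` for the Demazure product: expressed via a reduced word `l` of `w`,
as `demWord (l.reverse ++ l) = y` (note `l.reverse` is a reduced word of `w⁻¹`). -/
def DemSelf (n : ℕ) (w y : Equiv.Perm (Fin n)) : Prop :=
  ∃ l : List ℕ, wordProd n l = w ∧ l.length = len n w ∧ demWord n (l.reverse ++ l) = y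

/-- `w` is an atom of the involution `y`: a minimal-length permutation with
`w⁻¹ ∘ w = y` under the Demazure product. -/
def IsAtomOf (n : ℕ) (y w : Equiv.Perm (Fin n)) : Prop :=
  DemSelf n w y ∧ ∀ w', DemSelf n w' y → len n w ≤ len n w'

/-- The number of cycles (2-cycles together with fixed points) of an involution `y`. -/
def cycCount (n : ℕ) (y : Equiv.Perm (Fin n)) : ℕ :=
  (Finset.univ.filter fun i : Fin n => i ≤ y i).card

/-- The minimal length of an involution word for `y`
(`y = s_{a_1} ⊳ ⋯ ⊳ s_{a_p}`, equivalently `y = demWord (a.reverse ++ a)`). -/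
def ihat (n : ℕ) (y : Equiv.Perm (Fin n)) : ℕ :=
  sInf {p | ∃ a : List ℕ, a.length = p ∧ demWord n (a.reverse ++ a) = y}

/-- Bruhat order on `S_n` via the subword property. -/
def BruhatLE (n : ℕ) (u v : Equiv.Perm (Fin n)) : Prop :=
  ∀ l : List ℕ, wordProd n l = v → l.length = len n v →
    ∃ l' : List ℕ, l'.Sublist l ∧ wordProd n l' = u ∧ l'.length = len n u

/-- `y` standardizes (as a word `b` on a finite alphabet of naturals) to the
permutation `y` of positions: `y i` is the rank of the letter `b i`. -/
def stdEq {k : ℕ} (b : Fin k → ℕ) (y : Equiv.Perm (Fin k)) : Prop :=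
  Function.Injective b ∧
    ∀ i, (y i : ℕ) = (Finset.univ.filter fun j => b j < b i).card

/-- `q` is an inverse block atom of the block involution `b`: a word on the same
alphabet whose standardization is an inverse atom of `std b`. -/
def IsInvBlockAtomOf {k : ℕ} (b q : Fin k → ℕ) : Prop :=
  Set.range q = Set.range b ∧
    ∃ y w : Equiv.Perm (Fin k), stdEq b y ∧ y * y = 1 ∧ stdEq q w ∧ IsAtomOf k y w⁻¹

/-- Positions `p` and `q` (0-indexed) lie in the same block of the composition `μ`. -/
def SameBlock (μ : List ℕ) (p q : ℕ) : Prop :=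
  ∀ k ≤ μ.length, ((μ.take k).sum ≤ p ↔ (μ.take k).sum ≤ q)

/-- The starting position (0-indexed) of the block of `μ` containing position `p`. -/
def blockStart (μ : List ℕ) (p : ℕ) : ℕ :=
  (Finset.range (μ.length + 1)).sup fun k =>
    if (μ.take k).sum ≤ p then (μ.take k).sum else 0

/-- The 0-Hecke action `π ∘_μ s_i` on `μ`-involutions: if the values `i, i+1` of `π`
lie in different blocks it is `s_i ∘ π`; if they lie in the same block `B` it is
`s_i ∘ π ∘ s_r`, where `r` is the position (global, 0-indexed) within the block
corresponding to the relative value of `i` in `B`. -/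
def muAct (n : ℕ) (μ : List ℕ) (π : Equiv.Perm (Fin n)) (i : ℕ) : Equiv.Perm (Fin n) :=
  if h : i + 1 < n then
    let a : Fin n := ⟨i, Nat.lt_of_succ_lt h⟩
    let b : Fin n := ⟨i + 1, h⟩
    if SameBlock μ ((π⁻¹ a : Fin n) : ℕ) ((π⁻¹ b : Fin n) : ℕ) then
      demStepR n (demStepL n i π)
        (blockStart μ ((π⁻¹ a : Fin n) : ℕ) +
          (Finset.univ.filter fun p' : Fin n =>
            SameBlock μ (p' : ℕ) ((π⁻¹ a : Fin n) : ℕ) ∧ (π p' : ℕ) < i).card)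
    else demStepL n i π
  else π

/-- `e ∘_μ s_{a_1} ∘_μ ⋯ ∘_μ s_{a_p}` for a word `l = (a_1, …, a_p)`. -/
def muWord (n : ℕ) (μ : List ℕ) (l : List ℕ) : Equiv.Perm (Fin n) :=
  l.foldl (muAct n μ) 1

/-- `ℓ_μ(π)`: the minimal length of a `μ`-word for `π`. -/
def lmu (n : ℕ) (μ : List ℕ) (π : Equiv.Perm (Fin n)) : ℕ :=
  sInf {p | ∃ l : List ℕ, l.length = p ∧ muWord n μ l = π}

/-- The `i`-th block of the one-line notation of `π` with respect to `μ`, as a word. -/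
def blockWord (n : ℕ) (μ : List ℕ) (π : Equiv.Perm (Fin n)) (i : Fin μ.length) :
    Fin (μ.get i) → ℕ :=
  fun j =>
    if h : (μ.take (i : ℕ)).sum + (j : ℕ) < n then
      (π ⟨(μ.take (i : ℕ)).sum + (j : ℕ), h⟩ : ℕ)
    else 0

/-- `π` is a `μ`-involution: `μ` is a composition of `n` and every block of `π`
standardizes to an involution. -/
def IsMuInv (n : ℕ) (μ : List ℕ) (π : Equiv.Perm (Fin n)) : Prop :=
  μ.sum = n ∧ (∀ x ∈ μ, 0 < x) ∧
    ∀ i : Fin μ.length,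
      ∃ y : Equiv.Perm (Fin (μ.get i)), stdEq (blockWord n μ π i) y ∧ y * y = 1

/-- `w` is a `μ`-atom of `π`: a minimal-length permutation one of whose reduced words
is a reduced `μ`-word for `π`. -/
def IsMuAtom (n : ℕ) (μ : List ℕ) (π w : Equiv.Perm (Fin n)) : Prop :=
  ∃ l : List ℕ, wordProd n l = w ∧ l.length = len n w ∧
    muWord n μ l = π ∧ l.length = lmu n μ π

/-- `ν` refines `μ`: every partial sum of `μ` is a partial sum of `ν`. -/
def Refines (ν μ : List ℕ) : Prop :=
  ∀ k ≤ μ.length, ∃ k' ≤ ν.length, (ν.take k').sum = (μ.take k).sum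

/-- `μ`-Bruhat order via the subword property on reduced `μ`-words. -/
def MuBruhatLE (n : ℕ) (μ : List ℕ) (π τ : Equiv.Perm (Fin n)) : Prop :=
  ∀ l : List ℕ, muWord n μ l = τ → l.length = lmu n μ τ →
    ∃ l' : List ℕ, l'.Sublist l ∧ muWord n μ l' = π ∧ l'.length = lmu n μ π

/-- The longest element `w_0` of `S_n`. -/
def longest (n : ℕ) : Equiv.Perm (Fin n) :=
  ⟨Fin.rev, Fin.rev, Fin.rev_rev, Fin.rev_rev⟩

/-- The divided difference operator `∂_i f = (f - s_i f)/(x_i - x_{i+1})`. -/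
def ddiff (n i : ℕ) (f : MvPolynomial (Fin n) ℚ) : MvPolynomial (Fin n) ℚ :=
  if h : ∃ hi : i + 1 < n, ∃ g : MvPolynomial (Fin n) ℚ,
      f - MvPolynomial.rename (⇑(simpleT n i)) f =
        g * (MvPolynomial.X (⟨i, Nat.lt_of_succ_lt hi⟩ : Fin n) -
          MvPolynomial.X (⟨i + 1, hi⟩ : Fin n))
  then h.choose_spec.choose else 0

/-- A choice of reduced word for `v`. -/
def aRedWord (n : ℕ) (v : Equiv.Perm (Fin n)) : List ℕ :=
  if h : ∃ l : List ℕ, wordProd n l = v ∧ l.length = len n v then h.choose else []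

/-- The Schubert polynomial of `w`: obtained from the staircase monomial
`S_{w_0} = x_1^{n-1} ⋯ x_{n-1}` by applying divided differences along a reduced
word of `w_0 w` (so that `w_0 · s_{a_1} ⋯ s_{a_p} = w`). -/
def schubert (n : ℕ) (w : Equiv.Perm (Fin n)) : MvPolynomial (Fin n) ℚ :=
  (aRedWord n (longest n * w)).foldl (fun f i => ddiff n i f)
    (∏ i : Fin n, MvPolynomial.X i ^ (n - 1 - (i : ℕ)))

/-- The involution Schubert polynomial `S^I_y = ∑_{w ∈ A(y)} S_w`. -/
def invSchubert (n : ℕ) (y : Equiv.Perm (Fin n)) : MvPolynomial (Fin n) ℚ :=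
  ∑ w ∈ Finset.univ.filter (fun w => IsAtomOf n y w), schubert n w

/-- The `μ`-involution Schubert polynomial `S^μ_π = ∑_{w ∈ A_μ(π)} S_w`. -/
def muSchubert (n : ℕ) (μ : List ℕ) (π : Equiv.Perm (Fin n)) : MvPolynomial (Fin n) ℚ :=
  ∑ w ∈ Finset.univ.filter (fun w => IsMuAtom n μ π w), schubert n w

/-- The parabolic (Young) subgroup `S_μ ≤ S_n`, generated by the simple
transpositions not crossing a block boundary of `μ`. -/
def parabolic (n : ℕ) (μ : List ℕ) : Subgroup (Equiv.Perm (Fin n)) :=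
  Subgroup.closure
    {g | ∃ i : ℕ, i + 1 < n ∧ (∀ k ≤ μ.length, (μ.take k).sum ≠ i + 1) ∧ g = simpleT n i}

/-- `z = t^I_{ab}(y)` nontrivially, encoded via atoms: some atom `v` of `y` satisfies
`v ⋖ v t_{ab}` and `v t_{ab}` is an atom of `z`. -/
def tOpI (n : ℕ) (y z : Equiv.Perm (Fin n)) (a b : Fin n) : Prop :=
  ∃ v : Equiv.Perm (Fin n), IsAtomOf n y v ∧
    len n (v * Equiv.swap a b) = len n v + 1 ∧ IsAtomOf n z (v * Equiv.swap a b)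

/-- The local move on one-line notations: a consecutive subsequence `c, a, b`
(with `a < b < c`) of `u` is replaced by `b, c, a` in `v`, all other entries equal. -/
def LocalMove (n : ℕ) (u v : Equiv.Perm (Fin n)) : Prop :=
  ∃ p : ℕ, ∃ hp : p + 2 < n, ∃ a b c : Fin n, a < b ∧ b < c ∧
    u ⟨p, by omega⟩ = c ∧ u ⟨p + 1, by omega⟩ = a ∧ u ⟨p + 2, hp⟩ = b ∧
    v ⟨p, by omega⟩ = b ∧ v ⟨p + 1, by omega⟩ = c ∧ v ⟨p + 2, hp⟩ = a ∧
    ∀ q : Fin n, (q : ℕ) ≠ p → (q : ℕ) ≠ p + 1 → (q : ℕ) ≠ p + 2 → u q = v q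

/-- The values `x, x'` form a (non-fixed-point) block cycle of the word `b`. -/
def Paired (m : ℕ) (b : Fin m → ℕ) (x x' : ℕ) : Prop :=
  ∃ y : Equiv.Perm (Fin m), stdEq b y ∧ ∃ i : Fin m, b i = x ∧ b (y i) = x' ∧ y i ≠ i

/-- `q` is an inverse block atom of the block involution obtained from `b` by
restricting its cycle structure to the value set of `q` (with unmatched values
becoming fixed points). -/
def RestrictedInvBlockAtom (m : ℕ) (b : Fin m → ℕ) (k : ℕ) (q : Fin k → ℕ) : Prop :=
  ∃ bL : Fin k → ℕ, ∃ yL : Equiv.Perm (Fin k),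
    stdEq bL yL ∧ yL * yL = 1 ∧ Set.range bL = Set.range q ∧
    (∀ i j : Fin k, (yL i = j ∧ i ≠ j) ↔ Paired m b (bL i) (bL j)) ∧
    IsInvBlockAtomOf bL q

end

section Dev
open Equiv Finset

variable {n : ℕ}

lemma simpleT_mul_self (n i : ℕ) : simpleT n i * simpleT n i = 1 := by
  unfold simpleT; split
  · exact Equiv.swap_mul_self _ _
  · simp

lemma simpleT_of_ge (n i : ℕ) (h : ¬ i + 1 < n) : simpleT n i = 1 := by
  unfold simpleT; simp [h]

lemma wordProd_nil (n : ℕ) : wordProd n [] = 1 := rfl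

lemma wordProd_append (n : ℕ) (l m : List ℕ) :
    wordProd n (l ++ m) = wordProd n l * wordProd n m := by
  unfold wordProd; rw [List.map_append, List.prod_append]

lemma wordProd_concat (n : ℕ) (l : List ℕ) (i : ℕ) :
    wordProd n (l ++ [i]) = wordProd n l * simpleT n i := by
  rw [wordProd_append]; unfold wordProd; simp

lemma wordProd_cons (n : ℕ) (i : ℕ) (l : List ℕ) :
    wordProd n (i :: l) = simpleT n i * wordProd n l := by
  unfold wordProd; simp

/-- number of inversions -/
noncomputable def invNum (n : ℕ) (w : Equiv.Perm (Fin n)) : ℕ :=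
  ((Finset.univ : Finset (Fin n × Fin n)).filter fun p => p.1 < p.2 ∧ w p.2 < w p.1).card

lemma invNum_one (n : ℕ) : invNum n 1 = 0 := by
  unfold invNum
  rw [Finset.card_eq_zero, Finset.filter_eq_empty_iff]
  rintro ⟨x, y⟩ -
  simp only [Equiv.Perm.one_apply, not_and]
  intro h h2; exact absurd h2 (asymm h)

lemma invNum_inv (n : ℕ) (w : Equiv.Perm (Fin n)) : invNum n w⁻¹ = invNum n w := by
  unfold invNum
  apply Finset.card_bij' (fun p _ => (w⁻¹ p.2, w⁻¹ p.1)) (fun p _ => (w p.2, w p.1))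
  · rintro ⟨x, y⟩ hx
    simp only [Finset.mem_filter, Finset.mem_univ, true_and] at hx ⊢
    exact ⟨hx.2, by simpa using hx.1⟩
  · rintro ⟨x, y⟩ hx
    simp only [Finset.mem_filter, Finset.mem_univ, true_and] at hx ⊢
    exact ⟨hx.2, by simpa using hx.1⟩
  · rintro ⟨x, y⟩ hx; simp
  · rintro ⟨x, y⟩ hx; simp

end Dev
section Dev2
open Equiv Finset

variable {n : ℕ}

lemma simpleT_eq_swap {i : ℕ} (h : i + 1 < n) :
    simpleT n i = Equiv.swap ⟨i, Nat.lt_of_succ_lt h⟩ ⟨i + 1, h⟩ := by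
  unfold simpleT; rw [dif_pos h]

lemma swap_lt_swap {i : ℕ} (h : i + 1 < n) {x y : Fin n} (hxy : x < y)
    (hne : ¬((x : ℕ) = i ∧ (y : ℕ) = i + 1)) :
    Equiv.swap (⟨i, Nat.lt_of_succ_lt h⟩ : Fin n) ⟨i + 1, h⟩ x <
      Equiv.swap (⟨i, Nat.lt_of_succ_lt h⟩ : Fin n) ⟨i + 1, h⟩ y := by
  simp only [Equiv.swap_apply_def]
  split_ifs <;> simp only [Fin.ext_iff, Fin.lt_def] at * <;> omega

lemma card_filter_erase {α : Type*} [DecidableEq α] (s : Finset α) (P : α → Prop)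
    [DecidablePred P] (q : α) (hq : q ∈ s) :
    (s.filter P).card = ((s.erase q).filter P).card + if P q then 1 else 0 := by
  rw [Finset.filter_erase]
  by_cases hPq : P q
  · have hqf : q ∈ s.filter P := Finset.mem_filter.2 ⟨hq, hPq⟩
    rw [Finset.card_erase_of_mem hqf, if_pos hPq]
    have : 0 < (s.filter P).card := Finset.card_pos.2 ⟨q, hqf⟩
    omega
  · rw [Finset.erase_eq_of_notMem (fun hmem => hPq (Finset.mem_filter.1 hmem).2), if_neg hPq]
    omega

lemma invNum_mul_simpleT {i : ℕ} (h : i + 1 < n) (w : Equiv.Perm (Fin n)) :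
    if w ⟨i, Nat.lt_of_succ_lt h⟩ < w ⟨i + 1, h⟩
    then invNum n (w * simpleT n i) = invNum n w + 1
    else invNum n (w * simpleT n i) + 1 = invNum n w := by
  set a : Fin n := ⟨i, Nat.lt_of_succ_lt h⟩ with ha
  set b : Fin n := ⟨i + 1, h⟩ with hb
  have hab : a < b := by simp [ha, hb, Fin.lt_def]
  have hs : simpleT n i = Equiv.swap a b := simpleT_eq_swap h
  have hsa : simpleT n i a = b := by rw [hs]; exact Equiv.swap_apply_left a b
  have hsb : simpleT n i b = a := by rw [hs]; exact Equiv.swap_apply_right a b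
  have hss : ∀ x : Fin n, simpleT n i (simpleT n i x) = x := by
    intro x; rw [hs]; exact Equiv.swap_apply_self a b x
  have hslt : ∀ x y : Fin n, x < y → ¬((x : ℕ) = i ∧ (y : ℕ) = i + 1) →
      simpleT n i x < simpleT n i y := by
    intro x y h1 h2; rw [hs]; exact swap_lt_swap h h1 h2
  have key : (((Finset.univ.erase (a, b))).filter
        fun p : Fin n × Fin n => p.1 < p.2 ∧ (w * simpleT n i) p.2 < (w * simpleT n i) p.1).card =
      (((Finset.univ.erase (a, b))).filter
        fun p : Fin n × Fin n => p.1 < p.2 ∧ w p.2 < w p.1).card := by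
    apply Finset.card_bij' (fun p _ => (simpleT n i p.1, simpleT n i p.2))
      (fun p _ => (simpleT n i p.1, simpleT n i p.2))
    · rintro ⟨x, y⟩ hx
      simp only [Finset.mem_filter, Finset.mem_erase, Finset.mem_univ, true_and,
        and_true] at hx ⊢
      simp only [Equiv.Perm.mul_apply] at hx ⊢
      obtain ⟨hne, hlt, hinv⟩ := hx
      have hne' : ¬((x : ℕ) = i ∧ (y : ℕ) = i + 1) := by
        rintro ⟨h1, h2⟩
        exact hne (by rw [Prod.ext_iff]; exact ⟨Fin.ext h1, Fin.ext h2⟩)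
      refine ⟨?_, hslt x y hlt hne', hinv⟩
      rintro hp
      rw [Prod.ext_iff] at hp
      have h1 : x = b := by
        have := congrArg (simpleT n i) hp.1; rwa [hss, hsa] at this
      have h2 : y = a := by
        have := congrArg (simpleT n i) hp.2; rwa [hss, hsb] at this
      rw [h1, h2] at hlt; exact absurd hab (asymm hlt)
    · rintro ⟨x, y⟩ hx
      simp only [Finset.mem_filter, Finset.mem_erase, Finset.mem_univ, true_and,
        and_true] at hx ⊢
      simp only [Equiv.Perm.mul_apply] at hx ⊢
      obtain ⟨hne, hlt, hinv⟩ := hx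
      have hne' : ¬((x : ℕ) = i ∧ (y : ℕ) = i + 1) := by
        rintro ⟨h1, h2⟩
        exact hne (by rw [Prod.ext_iff]; exact ⟨Fin.ext h1, Fin.ext h2⟩)
      refine ⟨?_, hslt x y hlt hne', by rw [hss, hss]; exact hinv⟩
      rintro hp
      rw [Prod.ext_iff] at hp
      have h1 : x = b := by
        have := congrArg (simpleT n i) hp.1; rwa [hss, hsa] at this
      have h2 : y = a := by
        have := congrArg (simpleT n i) hp.2; rwa [hss, hsb] at this
      rw [h1, h2] at hlt; exact absurd hab (asymm hlt)
    · rintro ⟨x, y⟩ hx; simp [hss]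
    · rintro ⟨x, y⟩ hx; simp [hss]
  have hwsa : (w * simpleT n i) a = w b := by rw [Equiv.Perm.mul_apply, hsa]
  have hwsb : (w * simpleT n i) b = w a := by rw [Equiv.Perm.mul_apply, hsb]
  have e1 : invNum n (w * simpleT n i) =
      (((Finset.univ.erase (a, b))).filter
        fun p : Fin n × Fin n => p.1 < p.2 ∧ (w * simpleT n i) p.2 < (w * simpleT n i) p.1).card
      + if a < b ∧ w a < w b then 1 else 0 := by
    unfold invNum
    have := card_filter_erase (Finset.univ : Finset (Fin n × Fin n))
      (fun p => p.1 < p.2 ∧ (w * simpleT n i) p.2 < (w * simpleT n i) p.1) (a, b)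
      (Finset.mem_univ _)
    rw [this]
    congr 1
    simp only [hwsa, hwsb]
  have e2 : invNum n w =
      (((Finset.univ.erase (a, b))).filter
        fun p : Fin n × Fin n => p.1 < p.2 ∧ w p.2 < w p.1).card
      + if a < b ∧ w b < w a then 1 else 0 := by
    unfold invNum
    exact card_filter_erase _ _ (a, b) (Finset.mem_univ _)
  have hwab : w a ≠ w b := fun hc => absurd (w.injective hc) (Fin.ne_of_lt hab)
  by_cases hcase : w a < w b
  · rw [if_pos hcase, e1, e2, key, if_pos ⟨hab, hcase⟩,
      if_neg (fun hc => absurd hcase (asymm hc.2))]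
  · have hcase' : w b < w a := (hwab.symm).lt_of_le (not_lt.1 hcase)
    rw [if_neg hcase, e1, e2, key, if_neg (fun hc => hcase hc.2), if_pos ⟨hab, hcase'⟩]

lemma exists_descent (w : Equiv.Perm (Fin n)) (hw : w ≠ 1) :
    ∃ i : ℕ, ∃ h : i + 1 < n, w ⟨i + 1, h⟩ < w ⟨i, Nat.lt_of_succ_lt h⟩ := by
  by_contra hno
  push_neg at hno
  have step : ∀ (j : ℕ) (hj : j + 1 < n),
      w ⟨j, Nat.lt_of_succ_lt hj⟩ < w ⟨j + 1, hj⟩ := by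
    intro j hj
    refine (hno j hj).lt_of_ne ?_
    intro hc
    have := w.injective hc
    simp [Fin.ext_iff] at this
  have main : ∀ (d xv : ℕ) (hx : xv < n) (hy : xv + d + 1 < n),
      w ⟨xv, hx⟩ < w ⟨xv + d + 1, hy⟩ := by
    intro d
    induction d with
    | zero => intro xv hx hy; exact step xv hy
    | succ d ih =>
      intro xv hx hy
      exact lt_trans (ih xv hx (by omega)) (step (xv + d + 1) hy)
  have hmono : StrictMono w := by
    intro x y hxy
    have hlt : (x : ℕ) < (y : ℕ) := hxy
    have hd : (x : ℕ) + ((y : ℕ) - (x : ℕ) - 1) + 1 = (y : ℕ) := by omega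
    have hyn : (x : ℕ) + ((y : ℕ) - (x : ℕ) - 1) + 1 < n := by rw [hd]; exact y.isLt
    have := main ((y : ℕ) - (x : ℕ) - 1) (x : ℕ) x.isLt hyn
    have hx' : (⟨(x : ℕ), x.isLt⟩ : Fin n) = x := rfl
    have hy' : (⟨(x : ℕ) + ((y : ℕ) - (x : ℕ) - 1) + 1, hyn⟩ : Fin n) = y := Fin.ext hd
    rwa [hx', hy'] at this
  have hrange : Set.range w = Set.range (id : Fin n → Fin n) := by
    rw [Set.range_id]
    exact Set.range_eq_univ.2 w.surjective
  have hone : (w : Fin n → Fin n) = id := (hmono.range_inj strictMono_id).1 hrange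
  exact hw (Equiv.ext fun x => congrFun hone x)

end Dev2
section Dev3
open Equiv Finset

variable {n : ℕ}

lemma invNum_le_word (l : List ℕ) : invNum n (wordProd n l) ≤ l.length := by
  induction l using List.reverseRecOn with
  | nil => rw [wordProd_nil, invNum_one]; exact Nat.zero_le _
  | append_singleton t i ih =>
    rw [wordProd_concat]
    by_cases h : i + 1 < n
    · have := invNum_mul_simpleT h (wordProd n t)
      simp only [List.length_append, List.length_singleton]
      split_ifs at this <;> omega
    · rw [simpleT_of_ge n i h, mul_one]
      simp only [List.length_append, List.length_singleton]
      omega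

lemma invNum_pos_of_ne_one {w : Equiv.Perm (Fin n)} (hw : w ≠ 1) : 0 < invNum n w := by
  obtain ⟨i, h, hdesc⟩ := exists_descent w hw
  have := invNum_mul_simpleT h w
  rw [if_neg (asymm hdesc)] at this
  omega

lemma exists_word_invNum (w : Equiv.Perm (Fin n)) :
    ∃ l : List ℕ, wordProd n l = w ∧ l.length = invNum n w := by
  suffices H : ∀ m (w : Equiv.Perm (Fin n)), invNum n w = m →
      ∃ l : List ℕ, wordProd n l = w ∧ l.length = invNum n w from H _ w rfl
  intro m
  induction m using Nat.strong_induction_on with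
  | _ m ih =>
    intro w hm
    by_cases hw : w = 1
    · exact ⟨[], by rw [wordProd_nil, hw], by rw [hw, invNum_one]; rfl⟩
    · obtain ⟨i, h, hdesc⟩ := exists_descent w hw
      have hstep := invNum_mul_simpleT h w
      rw [if_neg (asymm hdesc)] at hstep
      have hlt : invNum n (w * simpleT n i) < m := by omega
      obtain ⟨l', hl', hlen⟩ := ih _ hlt (w * simpleT n i) rfl
      refine ⟨l' ++ [i], ?_, ?_⟩
      · rw [wordProd_concat, hl', mul_assoc, simpleT_mul_self, mul_one]
      · simp only [List.length_append, List.length_singleton]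
        omega

lemma len_eq_invNum (w : Equiv.Perm (Fin n)) : len n w = invNum n w := by
  obtain ⟨l, hl, hlen⟩ := exists_word_invNum w
  apply le_antisymm
  · exact Nat.sInf_le ⟨l, hlen, hl⟩
  · have hne : {p | ∃ l : List ℕ, l.length = p ∧ wordProd n l = w}.Nonempty :=
      ⟨l.length, l, rfl, hl⟩
    obtain ⟨l', hlen', hl'⟩ := Nat.sInf_mem hne
    calc invNum n w = invNum n (wordProd n l') := by rw [hl']
    _ ≤ l'.length := invNum_le_word l'
    _ = len n w := hlen'

lemma exists_reduced (w : Equiv.Perm (Fin n)) :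
    ∃ l : List ℕ, wordProd n l = w ∧ l.length = len n w := by
  obtain ⟨l, hl, hlen⟩ := exists_word_invNum w
  exact ⟨l, hl, by rw [hlen, len_eq_invNum]⟩

lemma len_le_word {l : List ℕ} {w : Equiv.Perm (Fin n)} (hl : wordProd n l = w) :
    len n w ≤ l.length := Nat.sInf_le ⟨l, rfl, hl⟩

lemma len_one : len n 1 = 0 := by rw [len_eq_invNum, invNum_one]

lemma len_eq_zero_iff {w : Equiv.Perm (Fin n)} : len n w = 0 ↔ w = 1 := by
  constructor
  · intro hl
    by_contra hw
    have := invNum_pos_of_ne_one hw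
    rw [len_eq_invNum] at hl
    omega
  · intro h; rw [h, len_one]

lemma len_mul_simpleT {i : ℕ} (h : i + 1 < n) (w : Equiv.Perm (Fin n)) :
    if w ⟨i, Nat.lt_of_succ_lt h⟩ < w ⟨i + 1, h⟩
    then len n (w * simpleT n i) = len n w + 1
    else len n (w * simpleT n i) + 1 = len n w := by
  have := invNum_mul_simpleT h w
  rw [len_eq_invNum, len_eq_invNum]
  exact this

lemma len_inv (w : Equiv.Perm (Fin n)) : len n w⁻¹ = len n w := by
  rw [len_eq_invNum, len_eq_invNum, invNum_inv]

lemma demStepR_of_ge {i : ℕ} (h : ¬ i + 1 < n) (w : Equiv.Perm (Fin n)) :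
    demStepR n w i = w := by
  unfold demStepR
  rw [simpleT_of_ge n i h, mul_one, if_neg (lt_irrefl _)]

lemma demStepR_eq_ite {i : ℕ} (h : i + 1 < n) (w : Equiv.Perm (Fin n)) :
    demStepR n w i =
      if w ⟨i, Nat.lt_of_succ_lt h⟩ < w ⟨i + 1, h⟩ then w * simpleT n i else w := by
  unfold demStepR
  have := len_mul_simpleT h w
  by_cases hc : w ⟨i, Nat.lt_of_succ_lt h⟩ < w ⟨i + 1, h⟩
  · rw [if_pos hc] at this ⊢
    rw [if_pos (by omega)]
  · rw [if_neg hc] at this ⊢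
    rw [if_neg (by omega)]

lemma demStepR_idem (w : Equiv.Perm (Fin n)) (i : ℕ) :
    demStepR n (demStepR n w i) i = demStepR n w i := by
  unfold demStepR
  by_cases hc : len n w < len n (w * simpleT n i)
  · rw [if_pos hc]
    rw [if_neg (by rw [mul_assoc, simpleT_mul_self, mul_one]; omega)]
  · rw [if_neg hc, if_neg hc]

lemma len_demStepR_le (w : Equiv.Perm (Fin n)) (i : ℕ) :
    len n (demStepR n w i) ≤ len n w + 1 := by
  unfold demStepR
  split_ifs with hc
  · by_cases h : i + 1 < n
    · have := len_mul_simpleT h w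
      split_ifs at this <;> omega
    · rw [simpleT_of_ge n i h, mul_one]; omega
  · omega

lemma len_simpleT {i : ℕ} (h : i + 1 < n) : len n (simpleT n i) = 1 := by
  have := len_mul_simpleT h 1
  rw [if_pos (by simp [Fin.lt_def])] at this
  rw [← one_mul (simpleT n i), this, len_one]

lemma demStepR_one (i : ℕ) : demStepR n 1 i = simpleT n i := by
  by_cases h : i + 1 < n
  · rw [demStepR_eq_ite h, if_pos (by simp [Fin.lt_def]), one_mul]
  · rw [demStepR_of_ge h, simpleT_of_ge n i h]

end Dev3
section Dev4
open Equiv Finset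

variable {n : ℕ}

lemma simpleT_apply_fst {i : ℕ} (h : i + 1 < n) :
    simpleT n i ⟨i, Nat.lt_of_succ_lt h⟩ = ⟨i + 1, h⟩ := by
  rw [simpleT_eq_swap h]; exact Equiv.swap_apply_left _ _

lemma simpleT_apply_snd {i : ℕ} (h : i + 1 < n) :
    simpleT n i ⟨i + 1, h⟩ = ⟨i, Nat.lt_of_succ_lt h⟩ := by
  rw [simpleT_eq_swap h]; exact Equiv.swap_apply_right _ _

lemma simpleT_apply_other {i : ℕ} (h : i + 1 < n) (z : Fin n)
    (hz1 : (z : ℕ) ≠ i) (hz2 : (z : ℕ) ≠ i + 1) : simpleT n i z = z := by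
  rw [simpleT_eq_swap h]
  exact Equiv.swap_apply_of_ne_of_ne (fun hc => hz1 (by rw [hc]))
    (fun hc => hz2 (by rw [hc]))

lemma simpleT_braid {j : ℕ} (h : j + 2 < n) :
    simpleT n j * simpleT n (j + 1) * simpleT n j =
      simpleT n (j + 1) * simpleT n j * simpleT n (j + 1) := by
  have h1 : j + 1 < n := by omega
  have h2 : j + 1 + 1 < n := by omega
  set u : Fin n := ⟨j, Nat.lt_of_succ_lt h1⟩ with hu
  set v : Fin n := ⟨j + 1, h1⟩ with hv
  set t : Fin n := ⟨j + 1 + 1, h2⟩ with ht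
  have e1 : simpleT n j = Equiv.swap u v := simpleT_eq_swap h1
  have e2 : simpleT n (j + 1) = Equiv.swap v t := simpleT_eq_swap h2
  have huv : u ≠ v := by simp [hu, hv, Fin.ext_iff]
  have hut : u ≠ t := by simp only [hu, ht, ne_eq, Fin.ext_iff]; omega
  have hvt : v ≠ t := by simp [hv, ht, Fin.ext_iff]
  rw [e1, e2]
  have L : Equiv.swap u v * Equiv.swap v t * Equiv.swap u v = Equiv.swap u t := by
    rw [Equiv.swap_comm u v, Equiv.swap_comm v t]
    exact Equiv.swap_mul_swap_mul_swap hvt.symm hut.symm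
  have R : Equiv.swap v t * Equiv.swap u v * Equiv.swap v t = Equiv.swap t u :=
    Equiv.swap_mul_swap_mul_swap huv hut
  rw [L, R, Equiv.swap_comm]

lemma simpleT_comm {j k : ℕ} (h : j + 2 ≤ k) :
    simpleT n j * simpleT n k = simpleT n k * simpleT n j := by
  by_cases hk : k + 1 < n
  · have hj : j + 1 < n := by omega
    have hd : (simpleT n j).Disjoint (simpleT n k) := by
      intro x
      by_cases hx : (x : ℕ) = j ∨ (x : ℕ) = j + 1
      · right
        exact simpleT_apply_other hk x (by omega) (by omega)
      · left
        push_neg at hx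
        exact simpleT_apply_other hj x hx.1 hx.2
    exact hd.commute.eq
  · rw [simpleT_of_ge n k hk, mul_one, one_mul]

lemma mul_simpleT_apply_fst {i : ℕ} (h : i + 1 < n) (w : Equiv.Perm (Fin n)) :
    (w * simpleT n i) ⟨i, Nat.lt_of_succ_lt h⟩ = w ⟨i + 1, h⟩ := by
  rw [Equiv.Perm.mul_apply, simpleT_apply_fst h]

lemma mul_simpleT_apply_snd {i : ℕ} (h : i + 1 < n) (w : Equiv.Perm (Fin n)) :
    (w * simpleT n i) ⟨i + 1, h⟩ = w ⟨i, Nat.lt_of_succ_lt h⟩ := by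
  rw [Equiv.Perm.mul_apply, simpleT_apply_snd h]

lemma mul_simpleT_apply_other {i : ℕ} (h : i + 1 < n) (w : Equiv.Perm (Fin n))
    (z : Fin n) (hz1 : (z : ℕ) ≠ i) (hz2 : (z : ℕ) ≠ i + 1) :
    (w * simpleT n i) z = w z := by
  rw [Equiv.Perm.mul_apply, simpleT_apply_other h z hz1 hz2]

lemma commLocal {j k : ℕ} (h : j + 2 ≤ k) (x : Equiv.Perm (Fin n)) :
    demStepR n (demStepR n x j) k = demStepR n (demStepR n x k) j := by
  by_cases hk : k + 1 < n
  · by_cases hj : j + 1 < n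
    · set j0 : Fin n := ⟨j, Nat.lt_of_succ_lt hj⟩
      set j1 : Fin n := ⟨j + 1, hj⟩
      set k0 : Fin n := ⟨k, Nat.lt_of_succ_lt hk⟩
      set k1 : Fin n := ⟨k + 1, hk⟩
      have e1 : ∀ w : Equiv.Perm (Fin n), (w * simpleT n k) j0 = w j0 :=
        fun w => mul_simpleT_apply_other hk w j0 (by simp [j0] <;> omega) (by simp [j0] <;> omega)
      have e2 : ∀ w : Equiv.Perm (Fin n), (w * simpleT n k) j1 = w j1 :=
        fun w => mul_simpleT_apply_other hk w j1 (by simp [j1] <;> omega) (by simp [j1] <;> omega)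
      have e3 : ∀ w : Equiv.Perm (Fin n), (w * simpleT n j) k0 = w k0 :=
        fun w => mul_simpleT_apply_other hj w k0 (by simp [k0] <;> omega) (by simp [k0] <;> omega)
      have e4 : ∀ w : Equiv.Perm (Fin n), (w * simpleT n j) k1 = w k1 :=
        fun w => mul_simpleT_apply_other hj w k1 (by simp [k1] <;> omega) (by simp [k1] <;> omega)
      by_cases c1 : x j0 < x j1 <;> by_cases c2 : x k0 < x k1
      · have A1 : demStepR n x j = x * simpleT n j := by rw [demStepR_eq_ite hj, if_pos c1]
        have A2 : demStepR n x k = x * simpleT n k := by rw [demStepR_eq_ite hk, if_pos c2]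
        have A3 : demStepR n (x * simpleT n j) k = x * simpleT n j * simpleT n k := by
          rw [demStepR_eq_ite hk, e3, e4, if_pos c2]
        have A4 : demStepR n (x * simpleT n k) j = x * simpleT n k * simpleT n j := by
          rw [demStepR_eq_ite hj, e1, e2, if_pos c1]
        rw [A1, A2, A3, A4, mul_assoc, mul_assoc, simpleT_comm h]
      · have A1 : demStepR n x j = x * simpleT n j := by rw [demStepR_eq_ite hj, if_pos c1]
        have A2 : demStepR n x k = x := by rw [demStepR_eq_ite hk, if_neg c2]
        have A3 : demStepR n (x * simpleT n j) k = x * simpleT n j := by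
          rw [demStepR_eq_ite hk, e3, e4, if_neg c2]
        simp only [A1, A2, A3]
      · have A1 : demStepR n x j = x := by rw [demStepR_eq_ite hj, if_neg c1]
        have A2 : demStepR n x k = x * simpleT n k := by rw [demStepR_eq_ite hk, if_pos c2]
        have A4 : demStepR n (x * simpleT n k) j = x * simpleT n k := by
          rw [demStepR_eq_ite hj, e1, e2, if_neg c1]
        simp only [A1, A2, A4]
      · have A1 : demStepR n x j = x := by rw [demStepR_eq_ite hj, if_neg c1]
        have A2 : demStepR n x k = x := by rw [demStepR_eq_ite hk, if_neg c2]
        simp only [A1, A2]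
    · rw [demStepR_of_ge hj, demStepR_of_ge hj]
  · rw [demStepR_of_ge hk, demStepR_of_ge hk]

lemma braidLocal {j : ℕ} (h : j + 2 < n) (x : Equiv.Perm (Fin n)) :
    demStepR n (demStepR n (demStepR n x j) (j + 1)) j =
      demStepR n (demStepR n (demStepR n x (j + 1)) j) (j + 1) := by
  have hj : j + 1 < n := by omega
  have hj2 : j + 1 + 1 < n := by omega
  set j0 : Fin n := ⟨j, Nat.lt_of_succ_lt hj⟩ with hj0def
  set j1 : Fin n := ⟨j + 1, hj⟩ with hj1def
  set j2 : Fin n := ⟨j + 2, h⟩ with hj2def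
  have key1 : (⟨j + 1, Nat.lt_of_succ_lt hj2⟩ : Fin n) = j1 := rfl
  have key2 : (⟨j + 1 + 1, hj2⟩ : Fin n) = j2 := rfl
  have hab : x j0 ≠ x j1 := fun hc => by
    have := x.injective hc; simp [hj0def, hj1def, Fin.ext_iff] at this
  have hbc : x j1 ≠ x j2 := fun hc => by
    have := x.injective hc; simp [hj1def, hj2def, Fin.ext_iff] at this
  have hac : x j0 ≠ x j2 := fun hc => by
    have := x.injective hc; simp [hj0def, hj2def, Fin.ext_iff] at this
  have sja : ∀ w : Equiv.Perm (Fin n), (w * simpleT n j) j0 = w j1 :=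
    fun w => mul_simpleT_apply_fst hj w
  have sjb : ∀ w : Equiv.Perm (Fin n), (w * simpleT n j) j1 = w j0 :=
    fun w => mul_simpleT_apply_snd hj w
  have sjc : ∀ w : Equiv.Perm (Fin n), (w * simpleT n j) j2 = w j2 :=
    fun w => mul_simpleT_apply_other hj w j2 (by simp [hj2def] <;> omega) (by simp [hj2def] <;> omega)
  have ska : ∀ w : Equiv.Perm (Fin n), (w * simpleT n (j + 1)) j0 = w j0 :=
    fun w => mul_simpleT_apply_other hj2 w j0 (by simp [hj0def] <;> omega) (by simp [hj0def] <;> omega)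
  have skb : ∀ w : Equiv.Perm (Fin n), (w * simpleT n (j + 1)) j1 = w j2 := by
    intro w
    have := mul_simpleT_apply_fst hj2 w
    rwa [key1, key2] at this
  have skc : ∀ w : Equiv.Perm (Fin n), (w * simpleT n (j + 1)) j2 = w j1 := by
    intro w
    have := mul_simpleT_apply_snd hj2 w
    rwa [key1, key2] at this
  have stepj : ∀ w : Equiv.Perm (Fin n), demStepR n w j =
      if w j0 < w j1 then w * simpleT n j else w := fun w => demStepR_eq_ite hj w
  have stepk : ∀ w : Equiv.Perm (Fin n), demStepR n w (j + 1) =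
      if w j1 < w j2 then w * simpleT n (j + 1) else w := by
    intro w
    rw [demStepR_eq_ite hj2 w, key1, key2]
  rcases lt_trichotomy (x j0) (x j1) with c1 | c1 | c1
  rotate_left
  · exact absurd c1 hab
  · -- b < a  (c1 : x j1 < x j0)
    rcases lt_trichotomy (x j1) (x j2) with c2 | c2 | c2
    rotate_left
    · exact absurd c2 hbc
    · -- c < b < a  (c2 : x j2 < x j1)
      have L1 : demStepR n x j = x := by rw [stepj, if_neg (asymm c1)]
      have R1 : demStepR n x (j + 1) = x := by rw [stepk, if_neg (asymm c2)]
      simp only [L1, R1]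
    · -- b < a, b < c  (c2 : x j1 < x j2)
      rcases lt_trichotomy (x j0) (x j2) with c3 | c3 | c3
      rotate_left
      · exact absurd c3 hac
      · -- b < c < a  (c3 : x j2 < x j0)
        have L1 : demStepR n x j = x := by rw [stepj, if_neg (asymm c1)]
        have R1 : demStepR n x (j + 1) = x * simpleT n (j + 1) := by
          rw [stepk, if_pos c2]
        have R2 : demStepR n (x * simpleT n (j + 1)) j = x * simpleT n (j + 1) := by
          rw [stepj, ska, skb, if_neg (asymm c3)]
        have R3 : demStepR n (x * simpleT n (j + 1)) (j + 1) = x * simpleT n (j + 1) := by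
          rw [stepk, skb, skc, if_neg (asymm c2)]
        simp only [L1, R1, R2, R3]
      · -- b < a < c  (c3 : x j0 < x j2)
        have L1 : demStepR n x j = x := by rw [stepj, if_neg (asymm c1)]
        have R1 : demStepR n x (j + 1) = x * simpleT n (j + 1) := by
          rw [stepk, if_pos c2]
        have R2 : demStepR n (x * simpleT n (j + 1)) j = x * simpleT n (j + 1) * simpleT n j := by
          rw [stepj, ska, skb, if_pos c3]
        have R3 : demStepR n (x * simpleT n (j + 1) * simpleT n j) (j + 1) =
            x * simpleT n (j + 1) * simpleT n j := by
          rw [stepk, sjb, sjc, ska, skc, if_neg (asymm c1)]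
        simp only [L1, R1, R2, R3]
  · -- a < b  (c1 : x j0 < x j1)
    rcases lt_trichotomy (x j1) (x j2) with c2 | c2 | c2
    rotate_left
    · exact absurd c2 hbc
    · -- a < b, c < b  (c2 : x j2 < x j1)
      rcases lt_trichotomy (x j0) (x j2) with c3 | c3 | c3
      rotate_left
      · exact absurd c3 hac
      · -- c < a < b  (c3 : x j2 < x j0)
        have L1 : demStepR n x j = x * simpleT n j := by rw [stepj, if_pos c1]
        have L2 : demStepR n (x * simpleT n j) (j + 1) = x * simpleT n j := by
          rw [stepk, sjb, sjc, if_neg (asymm c3)]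
        have L3 : demStepR n (x * simpleT n j) j = x * simpleT n j := by
          rw [stepj, sja, sjb, if_neg (asymm c1)]
        have R1 : demStepR n x (j + 1) = x := by rw [stepk, if_neg (asymm c2)]
        simp only [R1, L1, L2, L3]
      · -- a < c < b  (c3 : x j0 < x j2)
        have L1 : demStepR n x j = x * simpleT n j := by rw [stepj, if_pos c1]
        have L2 : demStepR n (x * simpleT n j) (j + 1) = x * simpleT n j * simpleT n (j + 1) := by
          rw [stepk, sjb, sjc, if_pos c3]
        have L3 : demStepR n (x * simpleT n j * simpleT n (j + 1)) j =
            x * simpleT n j * simpleT n (j + 1) := by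
          rw [stepj, ska, skb, sja, sjc, if_neg (asymm c2)]
        have R1 : demStepR n x (j + 1) = x := by rw [stepk, if_neg (asymm c2)]
        simp only [R1, L1, L2, L3]
    · -- a < b < c  (c2 : x j1 < x j2)
      have c3 : x j0 < x j2 := lt_trans c1 c2
      have L1 : demStepR n x j = x * simpleT n j := by rw [stepj, if_pos c1]
      have L2 : demStepR n (x * simpleT n j) (j + 1) = x * simpleT n j * simpleT n (j + 1) := by
        rw [stepk, sjb, sjc, if_pos c3]
      have L3 : demStepR n (x * simpleT n j * simpleT n (j + 1)) j =
          x * simpleT n j * simpleT n (j + 1) * simpleT n j := by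
        rw [stepj, ska, skb, sja, sjc, if_pos c2]
      have R1 : demStepR n x (j + 1) = x * simpleT n (j + 1) := by rw [stepk, if_pos c2]
      have R2 : demStepR n (x * simpleT n (j + 1)) j = x * simpleT n (j + 1) * simpleT n j := by
        rw [stepj, ska, skb, if_pos c3]
      have R3 : demStepR n (x * simpleT n (j + 1) * simpleT n j) (j + 1) =
          x * simpleT n (j + 1) * simpleT n j * simpleT n (j + 1) := by
        rw [stepk, sjb, sjc, ska, skc, if_pos c1]
      simp only [L1, L2, L3, R1, R2, R3]
      have hb := simpleT_braid h
      rw [mul_assoc (simpleT n j), mul_assoc (simpleT n (j+1))] at hb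
      simp only [mul_assoc]
      exact congrArg (fun z => x * z) hb

end Dev4
section Dev5
open Equiv Finset

variable {n : ℕ}

lemma apply_ne_of_ne {v : Equiv.Perm (Fin n)} {x y : Fin n} (h : x ≠ y) : v x ≠ v y :=
  fun hc => h (v.injective hc)

lemma len_mul_simpleT_cases {j : ℕ} (hj : j + 1 < n) (w : Equiv.Perm (Fin n)) :
    len n (w * simpleT n j) = len n w + 1 ∨ len n (w * simpleT n j) + 1 = len n w := by
  have := len_mul_simpleT hj w
  split_ifs at this
  · exact Or.inl this
  · exact Or.inr this

lemma descent_iff {j : ℕ} (hj : j + 1 < n) (v : Equiv.Perm (Fin n)) :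
    len n (v * simpleT n j) < len n v ↔ v ⟨j + 1, hj⟩ < v ⟨j, Nat.lt_of_succ_lt hj⟩ := by
  have hd := len_mul_simpleT hj v
  by_cases hc : v ⟨j, Nat.lt_of_succ_lt hj⟩ < v ⟨j + 1, hj⟩
  · rw [if_pos hc] at hd
    constructor
    · intro h; omega
    · intro h; exact absurd hc (asymm h)
  · rw [if_neg hc] at hd
    have hne : v ⟨j, Nat.lt_of_succ_lt hj⟩ ≠ v ⟨j + 1, hj⟩ :=
      apply_ne_of_ne (by simp [Fin.ext_iff])
    constructor
    · intro _; exact (not_lt.1 hc).lt_of_ne hne.symm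
    · intro _; omega

lemma mul_simpleT_apply_nat {i : ℕ} (h : i + 1 < n) (w : Equiv.Perm (Fin n))
    (m : ℕ) (hm : m < n) (h1 : m ≠ i) (h2 : m ≠ i + 1) :
    (w * simpleT n i) ⟨m, hm⟩ = w ⟨m, hm⟩ :=
  mul_simpleT_apply_other h w ⟨m, hm⟩ h1 h2

lemma wordProd_concat2 (m : List ℕ) (a b : ℕ) :
    wordProd n (m ++ [a, b]) = wordProd n m * simpleT n a * simpleT n b := by
  rw [show m ++ [a, b] = (m ++ [a]) ++ [b] by simp, wordProd_concat, wordProd_concat]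

lemma reduced_letter_lt {l : List ℕ} {w : Equiv.Perm (Fin n)} (hp : wordProd n l = w)
    (hl : l.length = len n w) : ∀ i ∈ l, i + 1 < n := by
  intro i hi
  by_contra hni
  obtain ⟨l1, l2, rfl⟩ := List.append_of_mem hi
  have hw : wordProd n (l1 ++ l2) = w := by
    rw [wordProd_append, wordProd_cons, simpleT_of_ge n i hni, one_mul] at hp
    rw [wordProd_append]; exact hp
  have hle := len_le_word hw
  simp only [List.length_append, List.length_cons] at hl hle
  omega

lemma fold_invariance :
    ∀ N : ℕ, ∀ v : Equiv.Perm (Fin n), len n v = N →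
      ∀ (u : Equiv.Perm (Fin n)) (l l' : List ℕ),
        wordProd n l = v → l.length = N → wordProd n l' = v → l'.length = N →
        List.foldl (demStepR n) u l = List.foldl (demStepR n) u l' := by
  intro N
  induction N using Nat.strong_induction_on with
  | _ N ih =>
  intro v hN u l l' hl hll hl' hll'
  rcases Nat.eq_zero_or_pos N with h0 | hpos
  · subst h0
    rw [List.length_eq_zero_iff.1 hll, List.length_eq_zero_iff.1 hll']
  rcases List.eq_nil_or_concat l with rfl | ⟨t, j, rfl⟩
  · simp at hll; omega
  rcases List.eq_nil_or_concat l' with rfl | ⟨t', k, rfl⟩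
  · simp at hll'; omega
  simp only [List.concat_eq_append] at hl hll hl' hll' ⊢
  have hj : j + 1 < n := reduced_letter_lt hl (by rw [hN]; exact hll) j (by simp)
  have hk : k + 1 < n := reduced_letter_lt hl' (by rw [hN]; exact hll') k (by simp)
  have ends : ∀ (i : ℕ) (s : List ℕ), i + 1 < n → wordProd n (s ++ [i]) = v →
      (s ++ [i]).length = N →
      wordProd n s = v * simpleT n i ∧ s.length + 1 = N ∧
        len n (v * simpleT n i) + 1 = N ∧ s.length = len n (v * simpleT n i) := by
    intro i s hi hp hlen
    rw [wordProd_concat] at hp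
    have hw : wordProd n s = v * simpleT n i := by
      calc wordProd n s = wordProd n s * simpleT n i * simpleT n i := by
            rw [mul_assoc, simpleT_mul_self, mul_one]
      _ = v * simpleT n i := by rw [hp]
    have h1 : s.length + 1 = N := by simpa using hlen
    have h2 : len n (v * simpleT n i) ≤ s.length := len_le_word hw
    rcases len_mul_simpleT_cases hi v with hc | hc
    · omega
    · exact ⟨hw, h1, by omega, by omega⟩
  obtain ⟨htw, htl, hjl, htred⟩ := ends j t hj hl hll
  obtain ⟨ht'w, ht'l, hkl, ht'red⟩ := ends k t' hk hl' hll'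
  by_cases hjk : j = k
  · subst hjk
    have e1 : List.foldl (demStepR n) u t = List.foldl (demStepR n) u t' :=
      ih (len n (v * simpleT n j)) (by omega) _ rfl u t t' htw htred ht'w ht'red
    simp [List.foldl_append, e1]
  -- commuting core
  have coreA : ∀ (a b : ℕ) (s s' : List ℕ), a + 2 ≤ b → a + 1 < n → b + 1 < n →
      wordProd n s = v * simpleT n a → s.length = len n (v * simpleT n a) →
      len n (v * simpleT n a) + 1 = N →
      wordProd n s' = v * simpleT n b → s'.length = len n (v * simpleT n b) →
      len n (v * simpleT n b) + 1 = N →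
      List.foldl (demStepR n) u (s ++ [a]) = List.foldl (demStepR n) u (s' ++ [b]) := by
    intro a b s s' hab ha hb hsw hsred hal hs'w hs'red hbl
    have hdb : v ⟨b + 1, hb⟩ < v ⟨b, Nat.lt_of_succ_lt hb⟩ :=
      (descent_iff hb v).1 (by omega)
    have hvb0 : (v * simpleT n a) ⟨b, Nat.lt_of_succ_lt hb⟩ =
        v ⟨b, Nat.lt_of_succ_lt hb⟩ :=
      mul_simpleT_apply_nat ha v b _ (by omega) (by omega)
    have hvb1 : (v * simpleT n a) ⟨b + 1, hb⟩ = v ⟨b + 1, hb⟩ :=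
      mul_simpleT_apply_nat ha v (b + 1) _ (by omega) (by omega)
    have hd2 : len n (v * simpleT n a * simpleT n b) < len n (v * simpleT n a) :=
      (descent_iff hb (v * simpleT n a)).2 (by rw [hvb0, hvb1]; exact hdb)
    have hzlen : len n (v * simpleT n a * simpleT n b) + 1 = len n (v * simpleT n a) := by
      rcases len_mul_simpleT_cases hb (v * simpleT n a) with hc | hc
      · omega
      · exact hc
    obtain ⟨m, hmw, hmred⟩ := exists_reduced (v * simpleT n a * simpleT n b)
    -- m ++ [b] is a reduced word of v * s_a
    have hcl1 : wordProd n (m ++ [b]) = v * simpleT n a := by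
      rw [wordProd_concat, hmw, mul_assoc, simpleT_mul_self, mul_one]
    have hcl1len : (m ++ [b]).length = len n (v * simpleT n a) := by
      simp only [List.length_append, List.length_cons, List.length_nil]
      omega
    -- m ++ [a] is a reduced word of v * s_b
    have hprod2 : v * simpleT n a * simpleT n b * simpleT n a = v * simpleT n b := by
      rw [mul_assoc v, simpleT_comm hab, ← mul_assoc, mul_assoc (v * simpleT n b),
        simpleT_mul_self, mul_one]
    have hcl2 : wordProd n (m ++ [a]) = v * simpleT n b := by
      rw [wordProd_concat, hmw, hprod2]
    have hcl2len : (m ++ [a]).length = len n (v * simpleT n b) := by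
      simp only [List.length_append, List.length_cons, List.length_nil]
      omega
    have ih1 : List.foldl (demStepR n) u s = List.foldl (demStepR n) u (m ++ [b]) :=
      ih (len n (v * simpleT n a)) (by omega) _ rfl u s (m ++ [b]) hsw hsred hcl1
        (by rw [hcl1len])
    have ih2 : List.foldl (demStepR n) u s' = List.foldl (demStepR n) u (m ++ [a]) :=
      ih (len n (v * simpleT n b)) (by omega) _ rfl u s' (m ++ [a]) hs'w hs'red hcl2
        (by rw [hcl2len])
    calc List.foldl (demStepR n) u (s ++ [a])
        = demStepR n (List.foldl (demStepR n) u s) a := by simp [List.foldl_append]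
      _ = demStepR n (List.foldl (demStepR n) u (m ++ [b])) a := by rw [ih1]
      _ = demStepR n (demStepR n (List.foldl (demStepR n) u m) b) a := by
          simp [List.foldl_append]
      _ = demStepR n (demStepR n (List.foldl (demStepR n) u m) a) b :=
          (commLocal hab _).symm
      _ = demStepR n (List.foldl (demStepR n) u (m ++ [a])) b := by
          simp [List.foldl_append]
      _ = demStepR n (List.foldl (demStepR n) u s') b := by rw [ih2]
      _ = List.foldl (demStepR n) u (s' ++ [b]) := by simp [List.foldl_append]
  -- braid core
  have coreB : ∀ (a : ℕ) (s s' : List ℕ), a + 2 < n →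
      wordProd n s = v * simpleT n a → s.length = len n (v * simpleT n a) →
      len n (v * simpleT n a) + 1 = N →
      wordProd n s' = v * simpleT n (a + 1) → s'.length = len n (v * simpleT n (a + 1)) →
      len n (v * simpleT n (a + 1)) + 1 = N →
      List.foldl (demStepR n) u (s ++ [a]) = List.foldl (demStepR n) u (s' ++ [a + 1]) := by
    intro a s s' ha2 hsw hsred hal hs'w hs'red hbl
    have ha : a + 1 < n := by omega
    have hb : a + 1 + 1 < n := ha2
    have hda : v ⟨a + 1, ha⟩ < v ⟨a, Nat.lt_of_succ_lt ha⟩ :=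
      (descent_iff ha v).1 (by omega)
    have hdb : v ⟨a + 1 + 1, hb⟩ < v ⟨a + 1, Nat.lt_of_succ_lt hb⟩ :=
      (descent_iff hb v).1 (by omega)
    -- z1 = v s_a, z2 = z1 s_{a+1}, z3 = z2 s_a
    -- z1 has descent at a+1
    have hz1a1 : (v * simpleT n a) ⟨a + 1, ha⟩ = v ⟨a, Nat.lt_of_succ_lt ha⟩ :=
      mul_simpleT_apply_snd ha v
    have hz1a2 : (v * simpleT n a) ⟨a + 1 + 1, hb⟩ = v ⟨a + 1 + 1, hb⟩ :=
      mul_simpleT_apply_nat ha v (a + 1 + 1) _ (by omega) (by omega)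
    have hd2 : len n (v * simpleT n a * simpleT n (a + 1)) < len n (v * simpleT n a) := by
      refine (descent_iff hb (v * simpleT n a)).2 ?_
      rw [hz1a2, hz1a1]
      exact lt_trans hdb hda
    have hz2len : len n (v * simpleT n a * simpleT n (a + 1)) + 1 =
        len n (v * simpleT n a) := by
      rcases len_mul_simpleT_cases hb (v * simpleT n a) with hc | hc
      · omega
      · exact hc
    -- z2 has descent at a
    have hz2a0 : (v * simpleT n a * simpleT n (a + 1)) ⟨a, Nat.lt_of_succ_lt ha⟩ =
        v ⟨a + 1, ha⟩ := by
      rw [mul_simpleT_apply_nat hb (v * simpleT n a) a _ (by omega) (by omega)]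
      exact mul_simpleT_apply_fst ha v
    have hz2a1 : (v * simpleT n a * simpleT n (a + 1)) ⟨a + 1, ha⟩ =
        v ⟨a + 1 + 1, hb⟩ := by
      have := mul_simpleT_apply_fst hb (v * simpleT n a)
      rw [this]
      exact hz1a2
    have hd3 : len n (v * simpleT n a * simpleT n (a + 1) * simpleT n a) <
        len n (v * simpleT n a * simpleT n (a + 1)) := by
      refine (descent_iff ha (v * simpleT n a * simpleT n (a + 1))).2 ?_
      rw [hz2a0, hz2a1]
      exact hdb
    have hz3len : len n (v * simpleT n a * simpleT n (a + 1) * simpleT n a) + 1 =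
        len n (v * simpleT n a * simpleT n (a + 1)) := by
      rcases len_mul_simpleT_cases ha (v * simpleT n a * simpleT n (a + 1)) with hc | hc
      · omega
      · exact hc
    obtain ⟨m, hmw, hmred⟩ := exists_reduced (v * simpleT n a * simpleT n (a + 1) * simpleT n a)
    have hbraid : v * simpleT n a * simpleT n (a + 1) * simpleT n a =
        v * simpleT n (a + 1) * simpleT n a * simpleT n (a + 1) := by
      have hbb := simpleT_braid ha2
      simp only [mul_assoc] at hbb ⊢
      rw [hbb]
    -- m ++ [a, a+1] is a reduced word of v * s_a
    have hclL : wordProd n (m ++ [a, a + 1]) = v * simpleT n a := by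
      rw [wordProd_concat2, hmw, mul_assoc (v * simpleT n a * simpleT n (a + 1)),
        simpleT_mul_self, mul_one, mul_assoc (v * simpleT n a), simpleT_mul_self, mul_one]
    have hclLlen : (m ++ [a, a + 1]).length = len n (v * simpleT n a) := by
      simp only [List.length_append, List.length_cons, List.length_nil]
      omega
    -- m ++ [a+1, a] is a reduced word of v * s_{a+1}
    have hclR : wordProd n (m ++ [a + 1, a]) = v * simpleT n (a + 1) := by
      rw [wordProd_concat2, hmw, hbraid,
        mul_assoc (v * simpleT n (a + 1) * simpleT n a), simpleT_mul_self, mul_one,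
        mul_assoc (v * simpleT n (a + 1)), simpleT_mul_self, mul_one]
    have hclRlen : (m ++ [a + 1, a]).length = len n (v * simpleT n (a + 1)) := by
      simp only [List.length_append, List.length_cons, List.length_nil]
      omega
    have ih1 : List.foldl (demStepR n) u s = List.foldl (demStepR n) u (m ++ [a, a + 1]) :=
      ih (len n (v * simpleT n a)) (by omega) _ rfl u s (m ++ [a, a + 1]) hsw hsred hclL
        (by rw [hclLlen])
    have ih2 : List.foldl (demStepR n) u s' =
        List.foldl (demStepR n) u (m ++ [a + 1, a]) :=
      ih (len n (v * simpleT n (a + 1))) (by omega) _ rfl u s' (m ++ [a + 1, a]) hs'w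
        hs'red hclR (by rw [hclRlen])
    calc List.foldl (demStepR n) u (s ++ [a])
        = demStepR n (List.foldl (demStepR n) u s) a := by simp [List.foldl_append]
      _ = demStepR n (List.foldl (demStepR n) u (m ++ [a, a + 1])) a := by rw [ih1]
      _ = demStepR n (demStepR n (demStepR n (List.foldl (demStepR n) u m) a) (a + 1)) a := by
          simp [List.foldl_append]
      _ = demStepR n (demStepR n (demStepR n (List.foldl (demStepR n) u m) (a + 1)) a)
          (a + 1) := braidLocal ha2 _
      _ = demStepR n (List.foldl (demStepR n) u (m ++ [a + 1, a])) (a + 1) := by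
          simp [List.foldl_append]
      _ = demStepR n (List.foldl (demStepR n) u s') (a + 1) := by rw [ih2]
      _ = List.foldl (demStepR n) u (s' ++ [a + 1]) := by simp [List.foldl_append]
  rcases Nat.lt_or_ge j k with hlt | hge
  · by_cases heq : k = j + 1
    · subst heq
      exact coreB j t t' (by omega) htw htred hjl ht'w ht'red hkl
    · exact coreA j k t t' (by omega) hj hk htw htred hjl ht'w ht'red hkl
  · have hltk : k < j := by omega
    by_cases heq : j = k + 1
    · subst heq
      exact (coreB k t' t (by omega) ht'w ht'red hkl htw htred hjl).symm
    · exact (coreA k j t' t (by omega) hk hj ht'w ht'red hkl htw htred hjl).symm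

end Dev5
section Dev6
open Equiv Finset

variable {n : ℕ}

lemma simpleT_inv (i : ℕ) : (simpleT n i)⁻¹ = simpleT n i :=
  inv_eq_of_mul_eq_one_right (simpleT_mul_self n i)

lemma len_simpleT_mul_cases {i : ℕ} (hi : i + 1 < n) (w : Equiv.Perm (Fin n)) :
    len n (simpleT n i * w) = len n w + 1 ∨ len n (simpleT n i * w) + 1 = len n w := by
  have h := len_mul_simpleT_cases hi w⁻¹
  have e : len n (w⁻¹ * simpleT n i) = len n (simpleT n i * w) := by
    rw [← len_inv (w⁻¹ * simpleT n i), mul_inv_rev, inv_inv, simpleT_inv]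
  rw [e, len_inv] at h
  exact h

lemma demWord_nil : demWord n [] = 1 := rfl

lemma demWord_concat (l : List ℕ) (i : ℕ) :
    demWord n (l ++ [i]) = demStepR n (demWord n l) i := by
  unfold demWord
  rw [List.foldl_append]
  rfl

lemma len_mul_le (u v : Equiv.Perm (Fin n)) : len n (u * v) ≤ len n u + len n v := by
  obtain ⟨a, ha, hal⟩ := exists_reduced u
  obtain ⟨b, hb, hbl⟩ := exists_reduced v
  have hw : wordProd n (a ++ b) = u * v := by rw [wordProd_append, ha, hb]
  have := len_le_word hw
  simp only [List.length_append] at this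
  omega

lemma len_simpleT_le (i : ℕ) : len n (simpleT n i) ≤ 1 := by
  have : wordProd n [i] = simpleT n i := by rw [wordProd_cons, wordProd_nil, mul_one]
  simpa using len_le_word this

lemma demWord_reduced {l : List ℕ} (h : l.length = len n (wordProd n l)) :
    demWord n l = wordProd n l := by
  induction l using List.reverseRecOn with
  | nil => rfl
  | append_singleton t i ihr =>
    rw [wordProd_concat] at h ⊢
    have h1 : len n (wordProd n t) ≤ t.length := len_le_word rfl
    have h2 : len n (wordProd n t * simpleT n i) ≤ len n (wordProd n t) + 1 := by
      have := len_mul_le (wordProd n t) (simpleT n i)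
      have := len_simpleT_le (n := n) i
      omega
    simp only [List.length_append, List.length_cons, List.length_nil] at h
    have h3 : t.length = len n (wordProd n t) := by omega
    rw [demWord_concat, ihr h3]
    unfold demStepR
    rw [if_pos (by omega)]

lemma len_demWord_le (l : List ℕ) : len n (demWord n l) ≤ l.length := by
  induction l using List.reverseRecOn with
  | nil => simp [demWord_nil, len_one]
  | append_singleton t i ihr =>
    rw [demWord_concat]
    have := len_demStepR_le (demWord n t) i
    simp only [List.length_append, List.length_cons, List.length_nil]
    omega

lemma demWord_full {l : List ℕ} (h : len n (demWord n l) = l.length) :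
    demWord n l = wordProd n l := by
  induction l using List.reverseRecOn with
  | nil => rfl
  | append_singleton t i ihr =>
    rw [demWord_concat] at h ⊢
    have h2 := len_demWord_le (n := n) t
    simp only [List.length_append, List.length_cons, List.length_nil] at h
    unfold demStepR at h ⊢
    by_cases hi : len n (demWord n t) < len n (demWord n t * simpleT n i)
    · rw [if_pos hi] at h ⊢
      have h3 : len n (demWord n t * simpleT n i) ≤ len n (demWord n t) + 1 := by
        have := len_mul_le (demWord n t) (simpleT n i)
        have := len_simpleT_le (n := n) i
        omega
      have h4 : len n (demWord n t) = t.length := by omega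
      rw [ihr h4, wordProd_concat]
    · rw [if_neg hi] at h ⊢
      omega

/-- H2: folding an arbitrary word is the same as folding a reduced word of its
Demazure product. -/
lemma fold_demWord (l : List ℕ) (u : Equiv.Perm (Fin n)) :
    ∀ {r : List ℕ}, wordProd n r = demWord n l → r.length = len n (demWord n l) →
    List.foldl (demStepR n) u l = List.foldl (demStepR n) u r := by
  induction l using List.reverseRecOn with
  | nil =>
    intro r hr hrl
    rw [demWord_nil, len_one] at hrl
    rw [List.length_eq_zero_iff.1 hrl]
  | append_singleton t i ihr =>
    intro r hr hrl
    obtain ⟨rt, hrt, hrtl⟩ := exists_reduced (demWord n t)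
    have ht : List.foldl (demStepR n) u t = List.foldl (demStepR n) u rt := ihr hrt hrtl
    have hfold : List.foldl (demStepR n) u (t ++ [i]) =
        demStepR n (List.foldl (demStepR n) u t) i := by
      rw [List.foldl_append]; rfl
    by_cases hi : i + 1 < n
    · rcases len_mul_simpleT_cases hi (demWord n t) with hc | hc
      · -- ascent
        have hdw : demWord n (t ++ [i]) = demWord n t * simpleT n i := by
          rw [demWord_concat]; unfold demStepR; rw [if_pos (by omega)]
        have h1 : wordProd n (rt ++ [i]) = demWord n (t ++ [i]) := by
          rw [wordProd_concat, hrt, hdw]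
        have h2 : (rt ++ [i]).length = len n (demWord n (t ++ [i])) := by
          rw [hdw]
          simp only [List.length_append, List.length_cons, List.length_nil]
          omega
        calc List.foldl (demStepR n) u (t ++ [i])
            = demStepR n (List.foldl (demStepR n) u t) i := hfold
          _ = demStepR n (List.foldl (demStepR n) u rt) i := by rw [ht]
          _ = List.foldl (demStepR n) u (rt ++ [i]) := by rw [List.foldl_append]; rfl
          _ = List.foldl (demStepR n) u r :=
              fold_invariance (len n (demWord n (t ++ [i]))) (demWord n (t ++ [i])) rfl u
                _ _ h1 h2 hr hrl
      · -- descent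
        have hdw : demWord n (t ++ [i]) = demWord n t := by
          rw [demWord_concat]; unfold demStepR; rw [if_neg (by omega)]
        obtain ⟨m, hmw, hml⟩ := exists_reduced (demWord n t * simpleT n i)
        have hm1 : wordProd n (m ++ [i]) = demWord n t := by
          rw [wordProd_concat, hmw, mul_assoc, simpleT_mul_self, mul_one]
        have hm1l : (m ++ [i]).length = len n (demWord n t) := by
          simp only [List.length_append, List.length_cons, List.length_nil]
          omega
        have e1 : List.foldl (demStepR n) u rt = List.foldl (demStepR n) u (m ++ [i]) :=
          fold_invariance (len n (demWord n t)) (demWord n t) rfl u _ _ hrt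
            (by rw [hrtl]) hm1 hm1l
        have e2 : List.foldl (demStepR n) u rt = List.foldl (demStepR n) u r :=
          fold_invariance (len n (demWord n t)) (demWord n t) rfl u _ _ hrt
            (by rw [hrtl]) (by rw [hr, hdw]) (by rw [hrl, hdw])
        calc List.foldl (demStepR n) u (t ++ [i])
            = demStepR n (List.foldl (demStepR n) u t) i := hfold
          _ = demStepR n (List.foldl (demStepR n) u (m ++ [i])) i := by rw [ht, e1]
          _ = demStepR n (demStepR n (List.foldl (demStepR n) u m) i) i := by
              rw [List.foldl_append]; rfl
          _ = demStepR n (List.foldl (demStepR n) u m) i := demStepR_idem _ i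
          _ = List.foldl (demStepR n) u (m ++ [i]) := by rw [List.foldl_append]; rfl
          _ = List.foldl (demStepR n) u rt := e1.symm
          _ = List.foldl (demStepR n) u r := e2
    · have hdw : demWord n (t ++ [i]) = demWord n t := by
        rw [demWord_concat, demStepR_of_ge hi]
      calc List.foldl (demStepR n) u (t ++ [i])
          = demStepR n (List.foldl (demStepR n) u t) i := hfold
        _ = List.foldl (demStepR n) u t := demStepR_of_ge hi _
        _ = List.foldl (demStepR n) u r := ihr (by rw [hr, hdw]) (by rw [hrl, hdw])

lemma swap_values {i : ℕ} (hi : i + 1 < n) {A B : Fin n} (hAB : A < B)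
    (hflip : simpleT n i B < simpleT n i A) :
    A = ⟨i, Nat.lt_of_succ_lt hi⟩ ∧ B = ⟨i + 1, hi⟩ := by
  by_contra hc
  have hne : ¬((A : ℕ) = i ∧ (B : ℕ) = i + 1) := by
    rintro ⟨h1, h2⟩; exact hc ⟨Fin.ext h1, Fin.ext h2⟩
  have hlt := swap_lt_swap hi hAB hne
  rw [← simpleT_eq_swap hi] at hlt
  exact absurd hlt (asymm hflip)

lemma exchange_eq {i j : ℕ} (hi : i + 1 < n) (hj : j + 1 < n) {x : Equiv.Perm (Fin n)}
    (hasc : x ⟨j, Nat.lt_of_succ_lt hj⟩ < x ⟨j + 1, hj⟩)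
    (hdesc : (simpleT n i * x) ⟨j + 1, hj⟩ < (simpleT n i * x) ⟨j, Nat.lt_of_succ_lt hj⟩) :
    simpleT n i * x = x * simpleT n j := by
  simp only [Equiv.Perm.mul_apply] at hdesc
  obtain ⟨hA, hB⟩ := swap_values hi hasc hdesc
  ext z
  rw [Equiv.Perm.mul_apply, Equiv.Perm.mul_apply]
  by_cases hz0 : z = ⟨j, Nat.lt_of_succ_lt hj⟩
  · subst hz0
    rw [simpleT_apply_fst hj, hB, hA, simpleT_apply_fst hi]
  · by_cases hz1 : z = ⟨j + 1, hj⟩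
    · subst hz1
      rw [simpleT_apply_snd hj, hA, hB, simpleT_apply_snd hi]
    · rw [simpleT_apply_other hj z (fun hc => hz0 (Fin.ext hc)) (fun hc => hz1 (Fin.ext hc))]
      have h1 : x z ≠ x ⟨j, Nat.lt_of_succ_lt hj⟩ := apply_ne_of_ne hz0
      have h2 : x z ≠ x ⟨j + 1, hj⟩ := apply_ne_of_ne hz1
      rw [hA] at h1; rw [hB] at h2
      exact congrArg Fin.val
        (simpleT_apply_other hi (x z) (fun hc => h1 (Fin.ext hc)) (fun hc => h2 (Fin.ext hc)))

lemma demStepL_step {i j : ℕ} (hi : i + 1 < n) (hj : j + 1 < n) (x : Equiv.Perm (Fin n))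
    (hasc : len n (x * simpleT n j) = len n x + 1) :
    demStepR n (demStepL n i x) j = demStepL n i (x * simpleT n j) := by
  rcases len_simpleT_mul_cases hi x with hL | hL
  · -- len (s_i x) = len x + 1
    have hA : demStepL n i x = simpleT n i * x := by
      unfold demStepL; rw [if_pos (by omega)]
    rcases len_mul_simpleT_cases hj (simpleT n i * x) with hc | hc
    · -- 1a
      rw [hA]
      unfold demStepR demStepL
      rw [if_pos (by omega), if_pos (by rw [← mul_assoc]; omega), mul_assoc]
    · -- 1b: exchange
      have hascj : x ⟨j, Nat.lt_of_succ_lt hj⟩ < x ⟨j + 1, hj⟩ := by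
        have hnd : ¬(x ⟨j + 1, hj⟩ < x ⟨j, Nat.lt_of_succ_lt hj⟩) := by
          rw [← descent_iff hj]; omega
        have hne : x ⟨j, Nat.lt_of_succ_lt hj⟩ ≠ x ⟨j + 1, hj⟩ :=
          apply_ne_of_ne (by simp [Fin.ext_iff])
        exact (not_lt.1 hnd).lt_of_ne hne
      have hdescj : (simpleT n i * x) ⟨j + 1, hj⟩ <
          (simpleT n i * x) ⟨j, Nat.lt_of_succ_lt hj⟩ :=
        (descent_iff hj (simpleT n i * x)).1 (by omega)
      have heq : simpleT n i * x = x * simpleT n j := exchange_eq hi hj hascj hdescj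
      rw [hA, heq]
      unfold demStepR demStepL
      rw [if_neg (by rw [mul_assoc, simpleT_mul_self, mul_one]; omega),
        if_neg (by rw [← mul_assoc, heq, mul_assoc, simpleT_mul_self, mul_one]; omega)]
  · -- len (s_i x) + 1 = len x
    have hA : demStepL n i x = x := by
      unfold demStepL; rw [if_neg (by omega)]
    have hc1 := len_mul_simpleT_cases hj (simpleT n i * x)
    have hc2 := len_simpleT_mul_cases hi (x * simpleT n j)
    rw [← mul_assoc] at hc2
    rw [hA]
    unfold demStepR demStepL
    rw [if_pos (by omega), if_neg (by rw [← mul_assoc]; omega)]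

/-- C-L: folding a reduced word of `x` starting from `s_i` computes `s_i ∘ x`. -/
lemma fold_from_simpleT {i : ℕ} (hi : i + 1 < n) :
    ∀ N (x : Equiv.Perm (Fin n)) (r : List ℕ), len n x = N → wordProd n r = x →
      r.length = N → List.foldl (demStepR n) (simpleT n i) r = demStepL n i x := by
  intro N
  induction N using Nat.strong_induction_on with
  | _ N ih =>
  intro x r hN hr hrl
  rcases Nat.eq_zero_or_pos N with h0 | hpos
  · subst h0
    have hx : x = 1 := len_eq_zero_iff.1 hN
    subst hx
    rw [List.length_eq_zero_iff.1 hrl]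
    unfold demStepL
    rw [mul_one, if_pos (by rw [len_one, len_simpleT hi]; omega)]
    rfl
  · have hx1 : x ≠ 1 := fun hc => by rw [hc, len_one] at hN; omega
    obtain ⟨j, hj, hdesc⟩ := exists_descent x hx1
    have hd : len n (x * simpleT n j) < len n x := (descent_iff hj x).2 hdesc
    have hdl : len n (x * simpleT n j) + 1 = len n x := by
      rcases len_mul_simpleT_cases hj x with hc | hc
      · omega
      · exact hc
    obtain ⟨m, hm, hml⟩ := exists_reduced (x * simpleT n j)
    have hmj : wordProd n (m ++ [j]) = x := by
      rw [wordProd_concat, hm, mul_assoc, simpleT_mul_self, mul_one]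
    have hmjl : (m ++ [j]).length = N := by
      simp only [List.length_append, List.length_cons, List.length_nil]
      omega
    have e0 : List.foldl (demStepR n) (simpleT n i) r =
        List.foldl (demStepR n) (simpleT n i) (m ++ [j]) :=
      fold_invariance N x hN _ r (m ++ [j]) hr hrl hmj hmjl
    have e1 : List.foldl (demStepR n) (simpleT n i) (m ++ [j]) =
        demStepR n (demStepL n i (x * simpleT n j)) j := by
      have := ih (len n (x * simpleT n j)) (by omega) (x * simpleT n j) m rfl hm hml
      rw [List.foldl_append, this]
      rfl
    rw [e0, e1]
    have := demStepL_step hi hj (x * simpleT n j)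
      (by rw [mul_assoc, simpleT_mul_self, mul_one]; omega)
    rw [this, mul_assoc, simpleT_mul_self, mul_one]

lemma demStepR_inv (i : ℕ) (w : Equiv.Perm (Fin n)) :
    demStepR n w⁻¹ i = (demStepL n i w)⁻¹ := by
  unfold demStepR demStepL
  have h1 : len n (w⁻¹ * simpleT n i) = len n (simpleT n i * w) := by
    rw [← len_inv (w⁻¹ * simpleT n i), mul_inv_rev, inv_inv, simpleT_inv]
  rw [len_inv, h1]
  split_ifs
  · rw [mul_inv_rev, simpleT_inv]
  · rfl

lemma demWord_reverse (l : List ℕ) : demWord n l.reverse = (demWord n l)⁻¹ := by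
  induction l with
  | nil => simp [demWord_nil]
  | cons i t ihr =>
    have h1 : (i :: t).reverse = t.reverse ++ [i] := by simp
    rw [h1, demWord_concat, ihr]
    by_cases hi : i + 1 < n
    · have h2 : demWord n (i :: t) = List.foldl (demStepR n) (simpleT n i) t := by
        unfold demWord
        rw [List.foldl_cons, demStepR_one]
      obtain ⟨rt, hrt, hrtl⟩ := exists_reduced (demWord n t)
      have h3 : List.foldl (demStepR n) (simpleT n i) t =
          List.foldl (demStepR n) (simpleT n i) rt := fold_demWord t _ hrt hrtl
      have h4 : List.foldl (demStepR n) (simpleT n i) rt = demStepL n i (demWord n t) :=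
        fold_from_simpleT hi (len n (demWord n t)) (demWord n t) rt rfl hrt hrtl
      rw [h2, h3, h4]
      exact demStepR_inv i (demWord n t)
    · have h2 : demWord n (i :: t) = demWord n t := by
        unfold demWord
        rw [List.foldl_cons, demStepR_one, simpleT_of_ge n i hi]
      rw [h2, demStepR_of_ge hi]

/-- S2: the involution-word fold depends only on the Demazure product. -/
lemma demRev_eq {a r : List ℕ} (hr : wordProd n r = demWord n a)
    (hrl : r.length = len n (demWord n a)) :
    demWord n (a.reverse ++ a) = demWord n (r.reverse ++ r) := by
  have key : ∀ x y : List ℕ, demWord n (x ++ y) =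
      List.foldl (demStepR n) (demWord n x) y := by
    intro x y; unfold demWord; rw [List.foldl_append]
  rw [key, key]
  have hred : r.length = len n (wordProd n r) := by rw [hr]; exact hrl
  have h1 : demWord n a.reverse = demWord n r.reverse := by
    rw [demWord_reverse, demWord_reverse, demWord_reduced hred, hr]
  rw [h1]
  exact fold_demWord a _ hr hrl

end Dev6
/-- The set of reduced involution words of `y` is the disjoint union, over atoms `w`
of `y`, of the sets of reduced words of `w`. -/
theorem reduced_involution_words (n : ℕ) (y : Equiv.Perm (Fin n)) (hy : y * y = 1) :
    (∀ a : List ℕ,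
      (demWord n (a.reverse ++ a) = y ∧ a.length = ihat n y) ↔
        ∃ w : Equiv.Perm (Fin n), IsAtomOf n y w ∧ wordProd n a = w ∧
          a.length = len n w) ∧
    (∀ w₁ w₂ : Equiv.Perm (Fin n), IsAtomOf n y w₁ → IsAtomOf n y w₂ → w₁ ≠ w₂ →
      ∀ a : List ℕ, ¬(wordProd n a = w₁ ∧ wordProd n a = w₂)) := by
  constructor
  · intro a
    constructor
    · rintro ⟨hD, hlen⟩
      obtain ⟨r, hr, hrl⟩ := exists_reduced (demWord n a)
      have hS2 : demWord n (a.reverse ++ a) = demWord n (r.reverse ++ r) :=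
        demRev_eq hr hrl
      have hry : demWord n (r.reverse ++ r) = y := by rw [← hS2, hD]
      have hle : ihat n y ≤ r.length := Nat.sInf_le ⟨r, rfl, hry⟩
      have h1 : len n (demWord n a) ≤ a.length := len_demWord_le a
      have h2 : len n (demWord n a) = a.length := by omega
      have hfull : demWord n a = wordProd n a := demWord_full h2
      have hlenw : a.length = len n (wordProd n a) := by rw [← hfull]; omega
      refine ⟨wordProd n a, ⟨⟨a, rfl, hlenw, hD⟩, ?_⟩, rfl, hlenw⟩
      rintro w' ⟨l', hl'w, hl'len, hl'D⟩
      have hle' : ihat n y ≤ l'.length := Nat.sInf_le ⟨l', rfl, hl'D⟩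
      omega
    · rintro ⟨w, ⟨⟨l, hlw, hllen, hlD⟩, hmin⟩, haw, halen⟩
      have hared : demWord n a = wordProd n a :=
        demWord_reduced (by rw [haw]; exact halen)
      have hlred : demWord n l = wordProd n l :=
        demWord_reduced (by rw [hlw]; exact hllen)
      obtain ⟨r, hr, hrl⟩ := exists_reduced w
      have e1 : demWord n (a.reverse ++ a) = demWord n (r.reverse ++ r) :=
        demRev_eq (by rw [hr, hared, haw]) (by rw [hrl, hared, haw])
      have e2 : demWord n (l.reverse ++ l) = demWord n (r.reverse ++ r) :=
        demRev_eq (by rw [hr, hlred, hlw]) (by rw [hrl, hlred, hlw])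
      have hDy : demWord n (a.reverse ++ a) = y := by rw [e1, ← e2, hlD]
      refine ⟨hDy, ?_⟩
      have hle : ihat n y ≤ a.length := Nat.sInf_le ⟨a, rfl, hDy⟩
      have hnon : {p | ∃ b : List ℕ, b.length = p ∧
          demWord n (b.reverse ++ b) = y}.Nonempty := ⟨a.length, a, rfl, hDy⟩
      obtain ⟨b, hbl, hbD⟩ := Nat.sInf_mem hnon
      have hbl' : b.length = ihat n y := hbl
      obtain ⟨rb, hrb, hrbl⟩ := exists_reduced (demWord n b)
      have e3 : demWord n (b.reverse ++ b) = demWord n (rb.reverse ++ rb) :=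
        demRev_eq hrb hrbl
      have hDSb : DemSelf n (demWord n b) y := ⟨rb, hrb, hrbl, by rw [← e3, hbD]⟩
      have hminb : len n w ≤ len n (demWord n b) := hmin (demWord n b) hDSb
      have h5 : len n (demWord n b) ≤ b.length := len_demWord_le b
      omega
  · rintro w₁ w₂ _ _ hne a ⟨ha1, ha2⟩
    exact hne (by rw [← ha1, ha2])
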